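/- Let τ = (1 + √5)/2, let Λ = Σ^{[0,τ²)} = { a + bτ : a, b ∈ ℤ, a − b/τ ∈ [0, τ²) } be enumerated increasingly by λ_k = (⌈k/τ⌉ + kτ)/τ². Then for every m ∈ ℤ: λ_m ∈ τ²Λ if and only if λ_m − λ_{m−1} = 1/τ. Equivalently, τ²Λ = Λ_S + 1/τ, where Λ_S = { λ_k : λ_{k+1} − λ_k = 1/τ } is the set of left-hand ends of tiles S; and consequently { λ_n : λ_{n+1} ∉ τ²Λ } = { λ_n : λ_{n+1} − λ_n = 1 } = Λ_L, the set of left-hand ends of tiles L. -/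

import Mathlib

open MeasureTheory Set Filter

noncomputable section

/-- The golden mean `τ = (1 + √5)/2`. -/
def tau : ℝ := (1 + Real.sqrt 5) / 2

/-- The cut-and-project model set `Σ^Ω = { a + bτ : a, b ∈ ℤ, a - b/τ ∈ Ω }`. -/
def SigmaSet (Ω : Set ℝ) : Set ℝ :=
  {x | ∃ a b : ℤ, x = (a : ℝ) + (b : ℝ) * tau ∧ (a : ℝ) - (b : ℝ) / tau ∈ Ω}

/-- The increasing enumeration `λ_k = (⌈k/τ⌉ + kτ)/τ²` of the rescaled Fibonacci
chain `Σ^{[0,τ²)}`. -/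
def fibChain (k : ℤ) : ℝ := ((⌈(k : ℝ) / tau⌉ : ℝ) + (k : ℝ) * tau) / tau ^ 2

/- ## Auxiliary lemmas -/

lemma tau_sq : tau ^ 2 = tau + 1 := by
  have h : Real.sqrt 5 ^ 2 = 5 := Real.sq_sqrt (by norm_num)
  unfold tau; nlinarith [h]

lemma tau_gt_one : 1 < tau := by
  have h : 2 < Real.sqrt 5 := by
    nlinarith [Real.sq_sqrt (show (0:ℝ) ≤ 5 by norm_num), Real.sqrt_nonneg 5]
  unfold tau; linarith

lemma tau_pos : 0 < tau := lt_trans one_pos tau_gt_one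
lemma tau_ne : tau ≠ 0 := ne_of_gt tau_pos

lemma tau_irr : Irrational tau := Real.goldenRatio_irrational

lemma lin_indep {a b a' b' : ℤ} (h : (a:ℝ) + b * tau = a' + b' * tau) : a = a' ∧ b = b' := by
  by_cases hb : b = b'
  · subst hb
    refine ⟨?_, rfl⟩
    exact_mod_cast (by linarith : (a:ℝ) = a')
  · exfalso
    have hbne : ((b:ℝ) - b') ≠ 0 := by
      intro h0
      exact hb (by exact_mod_cast sub_eq_zero.mp h0)
    refine tau_irr ⟨(a' - a : ℚ) / (b - b' : ℚ), ?_⟩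
    push_cast
    rw [div_eq_iff hbne]
    linarith

lemma inv_tau : (1:ℝ)/tau = tau - 1 := by
  rw [div_eq_iff tau_ne]; linear_combination (-1 : ℝ) * tau_sq

lemma div_tau (x : ℝ) : x / tau = x * (tau - 1) := by
  rw [div_eq_mul_one_div, inv_tau]

lemma fib_repr (m : ℤ) :
    fibChain m = ((2 * ⌈(m:ℝ)/tau⌉ - m : ℤ) : ℝ) + ((m - ⌈(m:ℝ)/tau⌉ : ℤ) : ℝ) * tau := by
  unfold fibChain
  push_cast
  rw [div_eq_iff (pow_ne_zero 2 tau_ne)]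
  linear_combination (-((⌈(m:ℝ)/tau⌉ : ℝ) + ((m:ℝ) - ⌈(m:ℝ)/tau⌉) * tau)) * tau_sq

lemma hw_eq (c m : ℤ) :
    ((5*c - 3*m : ℤ):ℝ) - ((2*m - 3*c : ℤ):ℝ)/tau = (3*tau + 2) * ((c:ℝ) - (m:ℝ)/tau) := by
  rw [div_tau, div_tau]
  push_cast
  linear_combination (3*(m:ℝ)) * tau_sq

lemma ceil_nonneg' (m : ℤ) : 0 ≤ (⌈(m:ℝ)/tau⌉ : ℝ) - (m:ℝ)/tau :=
  sub_nonneg.mpr (Int.le_ceil _)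

lemma mem_iff (m : ℤ) :
    fibChain m ∈ (fun x => tau ^ 2 * x) '' SigmaSet (Set.Ico 0 (tau ^ 2)) ↔
    (⌈(m : ℝ)/tau⌉ : ℝ) - (m : ℝ)/tau < 1/tau^2 := by
  have ht2 : (0:ℝ) < tau^2 := pow_pos tau_pos 2
  constructor
  · rintro ⟨x, ⟨a, b, rfl, hΩ⟩, hz⟩
    set c : ℤ := ⌈(m : ℝ)/tau⌉ with hc
    have key : ((a + b : ℤ) : ℝ) + ((a + 2*b : ℤ) : ℝ) * tau
        = ((2*c - m : ℤ) : ℝ) + ((m - c : ℤ) : ℝ) * tau := by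
      rw [← fib_repr, ← hz]
      push_cast
      linear_combination (-(a:ℝ) - b - (b:ℝ)*tau) * tau_sq
    obtain ⟨h1, h2⟩ := lin_indep key
    have ha : a = 5*c - 3*m := by omega
    have hb : b = 2*m - 3*c := by omega
    have hlt := hΩ.2
    rw [ha, hb, hw_eq, tau_sq] at hlt
    rw [lt_div_iff₀ ht2]
    nlinarith [mul_lt_mul_of_pos_right hlt ht2, tau_sq, tau_gt_one,
      ceil_nonneg' m, sq_nonneg tau]
  · intro h
    set c : ℤ := ⌈(m : ℝ)/tau⌉ with hc
    have h0 : (0:ℝ) ≤ (c:ℝ) - (m:ℝ)/tau := ceil_nonneg' m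
    rw [lt_div_iff₀ ht2] at h
    refine ⟨(((5*c - 3*m : ℤ):ℝ) + ((2*m - 3*c : ℤ):ℝ) * tau),
      ⟨5*c - 3*m, 2*m - 3*c, rfl, ?_, ?_⟩, ?_⟩
    · rw [hw_eq]
      nlinarith [tau_gt_one]
    · rw [hw_eq, tau_sq]
      nlinarith [mul_lt_mul_of_pos_left h (show (0:ℝ) < 3*tau+2 by nlinarith [tau_gt_one]),
        tau_sq, tau_gt_one]
    · show tau ^ 2 * _ = fibChain m
      rw [fib_repr m]
      push_cast
      linear_combination ((2*(c:ℝ) - m) + (2*(m:ℝ) - 3*(c:ℝ))*tau) * tau_sq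

lemma ht2 : (0:ℝ) < tau^2 := pow_pos tau_pos 2
lemma tau4_eq : tau^4 = 3*tau + 2 := by linear_combination (tau^2 + tau + 2) * tau_sq
lemma ht4 : (0:ℝ) < tau^4 := pow_pos tau_pos 4
lemma tau_lt_two : tau < 2 := by nlinarith [tau_sq]

lemma inv_tau_pos : (0:ℝ) < 1/tau := div_pos one_pos tau_pos
lemma inv_tau_lt_one : (1:ℝ)/tau < 1 := by rw [inv_tau]; linarith [tau_lt_two]

lemma gap_eq (m : ℤ) : fibChain (m+1) - fibChain m
    = (((⌈((m:ℝ)+1)/tau⌉ - ⌈(m:ℝ)/tau⌉ : ℤ) : ℝ) + tau) / tau^2 := by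
  unfold fibChain
  have h1 : ((m+1 : ℤ):ℝ) = (m:ℝ) + 1 := by push_cast; ring
  rw [h1, div_sub_div_same]
  congr 1
  push_cast
  ring

lemma d_cases (m : ℤ) : ⌈((m:ℝ)+1)/tau⌉ = ⌈(m:ℝ)/tau⌉ ∨ ⌈((m:ℝ)+1)/tau⌉ = ⌈(m:ℝ)/tau⌉ + 1 := by
  have hmono : ⌈(m:ℝ)/tau⌉ ≤ ⌈((m:ℝ)+1)/tau⌉ := by
    apply Int.ceil_le_ceil
    rw [div_le_div_iff₀ tau_pos tau_pos]
    nlinarith [tau_pos]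
  have hub : ⌈((m:ℝ)+1)/tau⌉ ≤ ⌈(m:ℝ)/tau⌉ + 1 := by
    rw [Int.ceil_le]
    push_cast
    have h1 : ((m:ℝ)+1)/tau = (m:ℝ)/tau + 1/tau := by ring
    rw [h1]
    have := Int.le_ceil ((m:ℝ)/tau)
    linarith [inv_tau_lt_one]
  omega

lemma gap_one_div (m : ℤ) :
    fibChain (m+1) - fibChain m = 1/tau ↔ ⌈((m:ℝ)+1)/tau⌉ = ⌈(m:ℝ)/tau⌉ := by
  rw [gap_eq, div_eq_div_iff (ne_of_gt ht2) (ne_of_gt tau_pos)]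
  constructor
  · intro h
    have h0 : ((⌈((m:ℝ)+1)/tau⌉ - ⌈(m:ℝ)/tau⌉ : ℤ) : ℝ) * tau = 0 := by
      linear_combination h
    rcases mul_eq_zero.mp h0 with h0 | h0
    · have : (⌈((m:ℝ)+1)/tau⌉ - ⌈(m:ℝ)/tau⌉ : ℤ) = 0 := by exact_mod_cast h0
      omega
    · exact absurd h0 tau_ne
  · intro h
    rw [h]
    push_cast
    ring

lemma gap_one (m : ℤ) :
    fibChain (m+1) - fibChain m = 1 ↔ ⌈((m:ℝ)+1)/tau⌉ = ⌈(m:ℝ)/tau⌉ + 1 := by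
  rw [gap_eq, div_eq_one_iff_eq (ne_of_gt ht2)]
  constructor
  · intro h
    have h0 : ((⌈((m:ℝ)+1)/tau⌉ - ⌈(m:ℝ)/tau⌉ : ℤ) : ℝ) = 1 := by
      linear_combination h + tau_sq
    have : (⌈((m:ℝ)+1)/tau⌉ - ⌈(m:ℝ)/tau⌉ : ℤ) = (1:ℤ) := by exact_mod_cast h0
    omega
  · intro h
    rw [h]
    push_cast
    linear_combination -tau_sq

lemma hinv2 : (1:ℝ)/tau^2 = 1 - 1/tau := by
  rw [inv_tau, div_eq_iff (ne_of_gt ht2)]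
  linear_combination (tau - 1) * tau_sq

lemma ceil_cond (m : ℤ) :
    (⌈(m:ℝ)/tau⌉ : ℝ) - (m:ℝ)/tau < 1/tau^2 ↔ ⌈((m:ℝ)-1)/tau⌉ = ⌈(m:ℝ)/tau⌉ := by
  have hkey : ((m:ℝ)-1)/tau = (m:ℝ)/tau - 1/tau := by ring
  constructor
  · intro h
    rw [Int.ceil_eq_iff]
    rw [hinv2] at h
    refine ⟨by rw [hkey]; linarith, ?_⟩
    rw [hkey]
    have := Int.le_ceil ((m:ℝ)/tau)
    linarith [inv_tau_pos]
  · intro h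
    have h2 := Int.ceil_eq_iff.mp h
    rw [hkey] at h2
    rw [hinv2]
    linarith [h2.1]

lemma surj {z : ℝ} (hz : z ∈ (fun x => tau ^ 2 * x) '' SigmaSet (Set.Ico 0 (tau ^ 2))) :
    ∃ m : ℤ, z = fibChain m := by
  obtain ⟨x, ⟨a, b, rfl, hΩ⟩, hz⟩ := hz
  have hz' : tau ^ 2 * ((a:ℝ) + b * tau) = z := hz
  refine ⟨3*a + 5*b, ?_⟩
  have key : ((2*a + 3*b : ℤ):ℝ) - ((3*a + 5*b : ℤ):ℝ)/tau = ((a:ℝ) - b/tau)/tau^4 := by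
    rw [div_tau, div_tau, eq_div_iff (ne_of_gt ht4), tau4_eq]
    push_cast
    linear_combination (-9*(a:ℝ) - 15*b) * tau_sq
  have hcm : (⌈((3*a + 5*b : ℤ):ℝ)/tau⌉ : ℤ) = 2*a + 3*b := by
    rw [Int.ceil_eq_iff]
    constructor
    · have h1 : ((a:ℝ) - b/tau)/tau^4 < 1 := by
        rw [div_lt_one ht4]
        have h2 : tau^2 < tau^4 := by nlinarith [tau_sq, tau_gt_one]
        linarith [hΩ.2]
      linarith [key, h1]
    · have h0 : (0:ℝ) ≤ ((a:ℝ) - b/tau)/tau^4 := div_nonneg hΩ.1 (le_of_lt ht4)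
      linarith [key, h0]
  rw [← hz', fib_repr, hcm]
  push_cast
  linear_combination ((a:ℝ) + b + (b:ℝ)*tau) * tau_sq

lemma part1 (m : ℤ) :
    fibChain m ∈ (fun x => tau ^ 2 * x) '' SigmaSet (Set.Ico 0 (tau ^ 2)) ↔
      fibChain m - fibChain (m - 1) = 1 / tau := by
  have hg := gap_one_div (m-1)
  have e1 : ((m-1:ℤ):ℝ) = (m:ℝ) - 1 := by push_cast; ring
  rw [e1, show ((m:ℝ) - 1) + 1 = (m:ℝ) from by ring,
    show m - 1 + 1 = m from by ring] at hg
  rw [mem_iff, ceil_cond, hg, eq_comm]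

/-- `λ_m ∈ τ²Λ` iff `λ_m - λ_{m-1} = 1/τ`; equivalently
`τ²Λ = Λ_S + 1/τ`, and `{λ_n : λ_{n+1} ∉ τ²Λ} = Λ_L`. -/
theorem statement15 :
    (∀ m : ℤ,
      fibChain m ∈ (fun x => tau ^ 2 * x) '' SigmaSet (Set.Ico 0 (tau ^ 2)) ↔
        fibChain m - fibChain (m - 1) = 1 / tau) ∧
    (fun x => tau ^ 2 * x) '' SigmaSet (Set.Ico 0 (tau ^ 2)) =
      (fun x => x + 1 / tau) ''
        {y : ℝ | ∃ k : ℤ, y = fibChain k ∧ fibChain (k + 1) - fibChain k = 1 / tau} ∧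
    {y : ℝ | ∃ n : ℤ, y = fibChain n ∧
        fibChain (n + 1) ∉ (fun x => tau ^ 2 * x) '' SigmaSet (Set.Ico 0 (tau ^ 2))} =
      {y : ℝ | ∃ n : ℤ, y = fibChain n ∧ fibChain (n + 1) - fibChain n = 1} := by
  refine ⟨part1, ?_, ?_⟩
  · ext z
    constructor
    · intro hz
      obtain ⟨m, rfl⟩ := surj hz
      have h1 := (part1 m).mp hz
      refine ⟨fibChain (m-1), ⟨m-1, rfl, ?_⟩, ?_⟩
      · rw [show m - 1 + 1 = m from by ring]
        exact h1
      · show fibChain (m-1) + 1/tau = fibChain m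
        linarith [h1]
    · rintro ⟨y, ⟨k, rfl, hk⟩, rfl⟩
      show fibChain k + 1/tau ∈ _
      have hek : fibChain k + 1/tau = fibChain (k+1) := by linarith [hk]
      rw [hek]
      apply (part1 (k+1)).mpr
      rw [show k + 1 - 1 = k from by ring]
      exact hk
  · ext z
    simp only [mem_setOf_eq]
    constructor
    · rintro ⟨n, rfl, hnot⟩
      refine ⟨n, rfl, ?_⟩
      have hne : ¬ (fibChain (n+1) - fibChain n = 1/tau) := by
        intro hgap
        apply hnot
        apply (part1 (n+1)).mpr
        rw [show n + 1 - 1 = n from by ring]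
        exact hgap
      rcases d_cases n with hd | hd
      · exact absurd ((gap_one_div n).mpr hd) hne
      · exact (gap_one n).mpr hd
    · rintro ⟨n, rfl, h1⟩
      refine ⟨n, rfl, fun hmem => ?_⟩
      have hgap := (part1 (n+1)).mp hmem
      rw [show n + 1 - 1 = n from by ring] at hgap
      rw [h1] at hgap
      linarith [inv_tau_lt_one, hgap]
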